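/- arXiv:1006.2852 — 5 statements merged into one kernel-verified Lean document; each statement's English description precedes it below -/
import Mathlib

section
/- Let g : ℝ^d → ℝ be a C² function, strictly convex in the sense that h ≤ ∇_u∇_u g(x) ≤ H for all unit vectors u and all x (with 0 < h < H). Let f : ℝ^d → ℝ be a convex piecewise-affine function with |f(x) − g(x)| < ε for all x. Then for any region Δ on which f is affine with gradient m_Δ, and any x₀ ∈ Δ, one has ‖m_Δ − ∇g(x₀)‖ ≤ 2√(ε·H). -/
open Set
open scoped RealInnerProductSpace

noncomputable section

variable {d : ℕ}

/-- A polytope: a compact intersection of finitely many half-spaces. -/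
def IsPolytope (S : Set (EuclideanSpace ℝ (Fin d))) : Prop :=
  IsCompact S ∧ ∃ (n : ℕ) (m : Fin n → EuclideanSpace ℝ (Fin d)) (c : Fin n → ℝ),
    S = {x | ∀ i, c i ≤ ⟪m i, x⟫}

/-- A closed face of a set. -/
def IsClosedFace (F S : Set (EuclideanSpace ℝ (Fin d))) : Prop :=
  F = S ∨ ∃ (m : EuclideanSpace ℝ (Fin d)) (c : ℝ),
    (∀ x ∈ S, c ≤ ⟪m, x⟫) ∧ F = S ∩ {x | ⟪m, x⟫ = c}

/-- A polytopal complex. -/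
def IsPolytopalComplex (𝒞 : Set (Set (EuclideanSpace ℝ (Fin d)))) : Prop :=
  (∀ Δ ∈ 𝒞, IsPolytope Δ) ∧
  (∀ x : EuclideanSpace ℝ (Fin d), ∃ U ∈ nhds x, {Δ ∈ 𝒞 | (Δ ∩ U).Nonempty}.Finite) ∧
  (∀ Δ ∈ 𝒞, ∀ F : Set (EuclideanSpace ℝ (Fin d)), IsClosedFace F Δ → F ∈ 𝒞) ∧
  (∀ Δ ∈ 𝒞, ∀ Δ' ∈ 𝒞, (Δ ∩ Δ').Nonempty →
    IsClosedFace (Δ ∩ Δ') Δ ∧ IsClosedFace (Δ ∩ Δ') Δ')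

/-- A polytopal decomposition of `ℝ^d`. -/
def IsPolytopalDecomp (𝒞 : Set (Set (EuclideanSpace ℝ (Fin d)))) : Prop :=
  IsPolytopalComplex 𝒞 ∧ ⋃₀ 𝒞 = univ

/-- A continuous polytopal (piecewise-affine) function on `ℝ^d`. -/
def IsPolytopalFn (f : EuclideanSpace ℝ (Fin d) → ℝ) : Prop :=
  Continuous f ∧ ∃ 𝒞, IsPolytopalDecomp 𝒞 ∧
    ∀ Δ ∈ 𝒞, ∃ (m : EuclideanSpace ℝ (Fin d)) (c : ℝ), ∀ x ∈ Δ, f x = ⟪m, x⟫ + c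

private lemma taylor_upper {d : ℕ} (g : EuclideanSpace ℝ (Fin d) → ℝ) (H : ℝ)
    (hg : ContDiff ℝ 2 g)
    (hdd : ∀ u : EuclideanSpace ℝ (Fin d), ‖u‖ = 1 → ∀ x, iteratedFDeriv ℝ 2 g x ![u, u] ≤ H)
    (hH0 : 0 ≤ H) (x₀ v : EuclideanSpace ℝ (Fin d)) :
    g (x₀ + v) ≤ g x₀ + fderiv ℝ g x₀ v + H * ‖v‖ ^ 2 / 2 := by
  -- second derivative bound along v
  have hB : ∀ x, fderiv ℝ (fderiv ℝ g) x v v ≤ H * ‖v‖ ^ 2 := by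
    intro x
    rcases eq_or_ne v 0 with rfl | hv
    · simp [mul_nonneg hH0 (by positivity : (0:ℝ) ≤ ‖(0 : EuclideanSpace ℝ (Fin d))‖ ^ 2)]
    · set u : EuclideanSpace ℝ (Fin d) := ‖v‖⁻¹ • v with hu
      have hup : ‖u‖ = 1 := norm_smul_inv_norm hv
      have hvu : ![v, v] = fun i => ‖v‖ • (![u, u] i) := by
        funext i
        fin_cases i <;>
          simp [hu, smul_smul, mul_inv_cancel₀ (norm_ne_zero_iff.2 hv)]
      have hscale : iteratedFDeriv ℝ 2 g x ![v, v]
          = ‖v‖ ^ 2 * iteratedFDeriv ℝ 2 g x ![u, u] := by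
        rw [hvu, (iteratedFDeriv ℝ 2 g x).map_smul_univ (fun _ : Fin 2 => ‖v‖) ![u, u]]
        simp [smul_eq_mul, sq]
      have h1 := hdd u hup x
      have h2 : iteratedFDeriv ℝ 2 g x ![v, v] ≤ ‖v‖ ^ 2 * H := by
        rw [hscale]
        exact mul_le_mul_of_nonneg_left h1 (by positivity)
      have h3 : iteratedFDeriv ℝ 2 g x ![v, v] = fderiv ℝ (fderiv ℝ g) x v v := by
        rw [iteratedFDeriv_two_apply]
        simp
      linarith [h2, h3.symm.le]
  have hgd : Differentiable ℝ g := hg.differentiable (by norm_num)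
  have hgd2 : Differentiable ℝ (fderiv ℝ g) :=
    (hg.fderiv_right (by norm_num : (1:WithTop ℕ∞) + 1 ≤ 2)).differentiable (by norm_num)
  set L : ℝ → EuclideanSpace ℝ (Fin d) := fun t => x₀ + t • v with hL
  have hLd : ∀ t : ℝ, HasDerivAt L v t := by
    intro t
    have : HasDerivAt (fun t : ℝ => t • v) ((1 : ℝ) • v) t :=
      (hasDerivAt_id t).smul_const v
    simpa [hL, one_smul] using this.const_add x₀
  have hφ : ∀ t : ℝ, HasDerivAt (fun t => g (L t)) (fderiv ℝ g (L t) v) t := fun t =>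
    (hgd (L t)).hasFDerivAt.comp_hasDerivAt t (hLd t)
  have hφ' : ∀ t : ℝ, HasDerivAt (fun t => fderiv ℝ g (L t) v)
      (fderiv ℝ (fderiv ℝ g) (L t) v v) t := by
    intro t
    have h1 : HasDerivAt (fun t => fderiv ℝ g (L t)) (fderiv ℝ (fderiv ℝ g) (L t) v) t :=
      (hgd2 (L t)).hasFDerivAt.comp_hasDerivAt t (hLd t)
    simpa using h1.clm_apply (hasDerivAt_const t v)
  set ψ' : ℝ → ℝ := fun t => fderiv ℝ g x₀ v + H * ‖v‖ ^ 2 * t - fderiv ℝ g (L t) v with hψ'def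
  have hψ'd : ∀ t : ℝ, HasDerivAt ψ' (H * ‖v‖ ^ 2 - fderiv ℝ (fderiv ℝ g) (L t) v v) t := by
    intro t
    have h1 : HasDerivAt (fun t : ℝ => fderiv ℝ g x₀ v + H * ‖v‖ ^ 2 * t)
        (H * ‖v‖ ^ 2) t := by
      simpa using ((hasDerivAt_id t).const_mul (H * ‖v‖ ^ 2)).const_add (fderiv ℝ g x₀ v)
    exact h1.sub (hφ' t)
  set ψ : ℝ → ℝ := fun t =>
    g x₀ + fderiv ℝ g x₀ v * t + H * ‖v‖ ^ 2 / 2 * t ^ 2 - g (L t) with hψdef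
  have hψd : ∀ t : ℝ, HasDerivAt ψ (ψ' t) t := by
    intro t
    have h1 : HasDerivAt (fun t : ℝ => g x₀ + fderiv ℝ g x₀ v * t + H * ‖v‖ ^ 2 / 2 * t ^ 2)
        (fderiv ℝ g x₀ v + H * ‖v‖ ^ 2 * t) t := by
      have h2 : HasDerivAt (fun t : ℝ => g x₀ + fderiv ℝ g x₀ v * t)
          (fderiv ℝ g x₀ v) t := by
        simpa using ((hasDerivAt_id t).const_mul (fderiv ℝ g x₀ v)).const_add (g x₀)
      have h3 : HasDerivAt (fun t : ℝ => H * ‖v‖ ^ 2 / 2 * t ^ 2)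
          (H * ‖v‖ ^ 2 * t) t := by
        have := (hasDerivAt_pow 2 t).const_mul (H * ‖v‖ ^ 2 / 2)
        convert this using 1 <;> try rfl
        simp; ring
      exact h2.add h3
    exact h1.sub (hφ t)
  obtain ⟨c₁, hc₁, hc₁eq⟩ := exists_hasDerivAt_eq_slope ψ ψ' one_pos
    (fun x _ => (hψd x).continuousAt.continuousWithinAt) (fun x _ => hψd x)
  obtain ⟨c₂, hc₂, hc₂eq⟩ := exists_hasDerivAt_eq_slope ψ'
    (fun t => H * ‖v‖ ^ 2 - fderiv ℝ (fderiv ℝ g) (L t) v v) hc₁.1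
    (fun x _ => (hψ'd x).continuousAt.continuousWithinAt) (fun x _ => hψ'd x)
  have hψ'0 : ψ' 0 = 0 := by simp [hψ'def, hL]
  have hψ0 : ψ 0 = 0 := by simp [hψdef, hL]
  have hψ'c₁ : 0 ≤ ψ' c₁ := by
    have hb := hB (L c₂)
    have hc₁pos : 0 < c₁ := hc₁.1
    rw [hψ'0, sub_zero, sub_zero] at hc₂eq
    have : ψ' c₁ = c₁ * (H * ‖v‖ ^ 2 - fderiv ℝ (fderiv ℝ g) (L c₂) v v) := by
      field_simp at hc₂eq
      linarith [hc₂eq]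
    rw [this]
    have : 0 ≤ H * ‖v‖ ^ 2 - fderiv ℝ (fderiv ℝ g) (L c₂) v v := by linarith
    positivity
  have hψ1 : 0 ≤ ψ 1 := by
    rw [hψ0, sub_zero, sub_zero, div_one] at hc₁eq
    linarith [hc₁eq, hψ'c₁]
  have : ψ 1 = g x₀ + fderiv ℝ g x₀ v + H * ‖v‖ ^ 2 / 2 - g (x₀ + v) := by
    simp [hψdef, hL]
  rw [this] at hψ1; linarith

/-- Lemma 3.6 (gradient estimate): if a convex piecewise-affine `f` is uniformly
`ε`-close to a uniformly strictly convex `C²` function `g`, then on any full-dimensional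
region where `f` is affine with gradient `m`, the gradient `m` differs from `∇g` by at
most `2√(εH)`. -/
theorem stmt1 (g f : EuclideanSpace ℝ (Fin d) → ℝ) (h H ε : ℝ)
    (hg : ContDiff ℝ 2 g) (h0 : 0 < h) (hH : h < H)
    (hdd : ∀ u : EuclideanSpace ℝ (Fin d), ‖u‖ = 1 → ∀ x,
      h ≤ iteratedFDeriv ℝ 2 g x ![u, u] ∧ iteratedFDeriv ℝ 2 g x ![u, u] ≤ H)
    (hfconv : ConvexOn ℝ Set.univ f) (hfpoly : IsPolytopalFn f)
    (hfg : ∀ x, |f x - g x| < ε)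
    (Δ : Set (EuclideanSpace ℝ (Fin d))) (hΔint : (interior Δ).Nonempty)
    (m : EuclideanSpace ℝ (Fin d)) (c : ℝ) (hfa : ∀ x ∈ Δ, f x = ⟪m, x⟫ + c) :
    ∀ x₀ ∈ Δ, ‖m - gradient g x₀‖ ≤ 2 * Real.sqrt (ε * H) := by
  intro x₀ hx₀
  have hε : 0 < ε := lt_of_le_of_lt (abs_nonneg _) (hfg x₀)
  have hH0 : 0 < H := h0.trans hH
  -- f lies above its affine piece
  obtain ⟨y, hy⟩ := hΔint
  obtain ⟨r, hr, hball⟩ := Metric.isOpen_iff.1 isOpen_interior y hy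
  have hflb : ∀ x, ⟪m, x⟫ + c ≤ f x := by
    intro x
    set s : ℝ := r / (2 * (‖x - y‖ + r)) with hs
    have hden : 0 < ‖x - y‖ + r := by positivity
    have hs0 : 0 < s := by positivity
    have hs1 : s < 1 := by
      rw [hs, div_lt_one (by positivity)]
      nlinarith [norm_nonneg (x - y)]
    have hzball : y + s • (x - y) ∈ Metric.ball y r := by
      rw [Metric.mem_ball, dist_eq_norm]
      have : y + s • (x - y) - y = s • (x - y) := by abel
      rw [this, norm_smul, Real.norm_eq_abs, abs_of_pos hs0, hs]
      rw [div_mul_eq_mul_div, div_lt_iff₀ (by positivity)]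
      nlinarith [norm_nonneg (x - y)]
    have hzΔ : y + s • (x - y) ∈ Δ := interior_subset (hball hzball)
    have hyΔ : y ∈ Δ := interior_subset hy
    have hconv := hfconv.2 (mem_univ x) (mem_univ y) (show (0:ℝ) ≤ s from hs0.le)
      (show (0:ℝ) ≤ 1 - s by linarith) (show s + (1 - s) = 1 by ring)
    have heq : s • x + (1 - s) • y = y + s • (x - y) := by module
    rw [heq, hfa _ hzΔ, hfa _ hyΔ] at hconv
    have hz : ⟪m, y + s • (x - y)⟫ = ⟪m, y⟫ + s * ⟪m, x⟫ - s * ⟪m, y⟫ := by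
      rw [inner_add_right, real_inner_smul_right, inner_sub_right]; ring
    rw [hz] at hconv
    simp only [smul_eq_mul] at hconv
    nlinarith [hconv, hs0]
  -- gradient / fderiv relation
  have hgrad : ∀ v, fderiv ℝ g x₀ v = ⟪gradient g x₀, v⟫ := by
    intro v
    rw [gradient]
    exact (InnerProductSpace.toDual_symm_apply).symm
  -- key inequality
  have key : ∀ v : EuclideanSpace ℝ (Fin d),
      ⟪m - gradient g x₀, v⟫ ≤ 2 * ε + H * ‖v‖ ^ 2 / 2 := by
    intro v
    have ht := taylor_upper g H hg (fun u hu x => (hdd u hu x).2) hH0.le x₀ v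
    rw [hgrad] at ht
    have h1 : g (x₀ + v) > f (x₀ + v) - ε := by
      have := abs_sub_lt_iff.1 (hfg (x₀ + v))
      linarith [this.1]
    have h2 : g x₀ < f x₀ + ε := by
      have := abs_sub_lt_iff.1 (hfg x₀)
      linarith [this.2]
    have h3 := hflb (x₀ + v)
    have h4 : f x₀ = ⟪m, x₀⟫ + c := hfa _ hx₀
    have h5 : ⟪m, x₀ + v⟫ = ⟪m, x₀⟫ + ⟪m, v⟫ := inner_add_right m x₀ v
    have h6 : ⟪m - gradient g x₀, v⟫ = ⟪m, v⟫ - ⟪gradient g x₀, v⟫ :=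
      inner_sub_left m (gradient g x₀) v
    linarith
  set w : EuclideanSpace ℝ (Fin d) := m - gradient g x₀ with hw
  rcases eq_or_ne w 0 with hw0 | hw0
  · rw [hw0, norm_zero]
    positivity
  · have hwn : 0 < ‖w‖ := norm_pos_iff.2 hw0
    set t : ℝ := 2 * Real.sqrt (ε / H) with hts
    have htpos : 0 < t := by
      rw [hts]
      have : 0 < Real.sqrt (ε / H) := Real.sqrt_pos.2 (by positivity)
      linarith
    have ht2 : t ^ 2 = 4 * (ε / H) := by
      rw [hts, mul_pow, Real.sq_sqrt (by positivity : (0:ℝ) ≤ ε / H)]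
      ring
    have hk := key ((t / ‖w‖) • w)
    have hin : ⟪w, (t / ‖w‖) • w⟫ = t * ‖w‖ := by
      rw [real_inner_smul_right, real_inner_self_eq_norm_sq]
      field_simp
    have hnv : ‖(t / ‖w‖) • w‖ ^ 2 = t ^ 2 := by
      rw [norm_smul, Real.norm_eq_abs, abs_of_pos (by positivity), mul_pow]
      field_simp
    rw [hin, hnv, ht2] at hk
    have hk2 : t * ‖w‖ ≤ 4 * ε := by
      have : H * (4 * (ε / H)) / 2 = 2 * ε := by field_simp; norm_num
      linarith [hk, this]
    have hprod : t * (2 * Real.sqrt (ε * H)) = 4 * ε := by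
      rw [hts]
      have : Real.sqrt (ε / H) * Real.sqrt (ε * H) = ε := by
        rw [← Real.sqrt_mul (by positivity) (ε * H)]
        have : ε / H * (ε * H) = ε ^ 2 := by field_simp
        rw [this, Real.sqrt_sq hε.le]
      nlinarith [this]
    exact (mul_le_mul_iff_right₀ htpos).mp (by rw [hprod]; exact hk2)
end
end

section
/- Let g : ℝ^d → ℝ be C² with h ≤ ∇_u∇_u g ≤ H everywhere for all unit vectors u (0 < h ≤ H), and let f be a convex piecewise-affine function with |f − g| < ε everywhere. Then any region Δ on which f is affine has Euclidean diameter at most (4/h)·√(ε·H); in particular Δ is bounded. -/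
open Set
open scoped RealInnerProductSpace

noncomputable section

variable {d : ℕ}

/-- Strong midpoint convexity from a lower Hessian bound. -/
lemma strong_midpoint {d : ℕ} (g : EuclideanSpace ℝ (Fin d) → ℝ) (h : ℝ)
    (hg : ContDiff ℝ 2 g)
    (hdd : ∀ u : EuclideanSpace ℝ (Fin d), ‖u‖ = 1 → ∀ x,
      h ≤ iteratedFDeriv ℝ 2 g x ![u, u])
    (x x' : EuclideanSpace ℝ (Fin d)) :
    g ((1/2 : ℝ) • x + (1/2 : ℝ) • x') + h * ‖x - x'‖ ^ 2 / 8 ≤ (g x + g x') / 2 := by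
  by_cases hxx : x = x'
  · subst hxx
    have : (1/2 : ℝ) • x + (1/2 : ℝ) • x = x := by module
    rw [this]
    simp
  set v := x' - x with hv
  have hvne : v ≠ 0 := sub_ne_zero.2 (Ne.symm hxx)
  have hvnorm : (0:ℝ) < ‖v‖ := norm_pos_iff.2 hvne
  set u := ‖v‖⁻¹ • v with hu
  have hunorm : ‖u‖ = 1 := by
    rw [hu, norm_smul, norm_inv, norm_norm, inv_mul_cancel₀ hvnorm.ne']
  have hgd : Differentiable ℝ g := hg.differentiable (by norm_num)
  have hgd2 : Differentiable ℝ (fderiv ℝ g) :=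
    (hg.fderiv_right (m := 1) (by norm_num)).differentiable (by norm_num)
  have hline : ∀ t : ℝ, HasDerivAt (fun s : ℝ => x + s • v) v t := fun t => by
    simpa using ((hasDerivAt_id t).smul_const v).const_add x
  have d1 : ∀ t : ℝ, HasDerivAt (fun s : ℝ => g (x + s • v)) (fderiv ℝ g (x + t • v) v) t :=
    fun t => (hgd (x + t • v)).hasFDerivAt.comp_hasDerivAt t (hline t)
  have d2 : ∀ t : ℝ, HasDerivAt (fun s : ℝ => fderiv ℝ g (x + s • v) v)
      (fderiv ℝ (fderiv ℝ g) (x + t • v) v v) t := fun t => by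
    have h1 : HasDerivAt (fun s : ℝ => fderiv ℝ g (x + s • v))
        (fderiv ℝ (fderiv ℝ g) (x + t • v) v) t :=
      (hgd2 (x + t • v)).hasFDerivAt.comp_hasDerivAt t (hline t)
    simpa using h1.clm_apply (hasDerivAt_const t v)
  -- Hessian bound along v
  have hess : ∀ p, h * ‖v‖ ^ 2 ≤ fderiv ℝ (fderiv ℝ g) p v v := by
    intro p
    have h2 : iteratedFDeriv ℝ 2 g p ![v, v] = fderiv ℝ (fderiv ℝ g) p v v := by
      rw [iteratedFDeriv_two_apply]; rfl
    have hvu : (![v, v] : Fin 2 → EuclideanSpace ℝ (Fin d))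
        = fun i => (fun _ : Fin 2 => ‖v‖) i • (![u, u] : Fin 2 → _) i := by
      funext i
      fin_cases i <;> simp [hu, smul_smul, mul_inv_cancel₀ hvnorm.ne']
    have hsc : iteratedFDeriv ℝ 2 g p ![v, v]
        = (‖v‖ ^ 2) • iteratedFDeriv ℝ 2 g p ![u, u] := by
      rw [hvu, (iteratedFDeriv ℝ 2 g p).map_smul_univ]
      congr 1
      simp [pow_two]
    have := hdd u hunorm p
    calc h * ‖v‖ ^ 2 = ‖v‖ ^ 2 * h := mul_comm _ _
      _ ≤ ‖v‖ ^ 2 * iteratedFDeriv ℝ 2 g p ![u, u] :=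
          mul_le_mul_of_nonneg_left this (by positivity)
      _ = fderiv ℝ (fderiv ℝ g) p v v := by rw [← h2, hsc]; simp [smul_eq_mul]
  -- The shifted function is convex
  set ψ : ℝ → ℝ := fun t => g (x + t • v) - h * ‖v‖ ^ 2 / 2 * t ^ 2 with hψ
  have dψ1 : ∀ t : ℝ, HasDerivAt ψ (fderiv ℝ g (x + t • v) v - h * ‖v‖ ^ 2 * t) t := by
    intro t
    have := (d1 t).sub (((hasDerivAt_pow 2 t).const_mul (h * ‖v‖ ^ 2 / 2)))
    convert this using 1 <;> first | rfl | (simp; ring)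
  have hderivψ : deriv ψ = fun t => fderiv ℝ g (x + t • v) v - h * ‖v‖ ^ 2 * t :=
    funext fun t => (dψ1 t).deriv
  have dψ2 : ∀ t : ℝ, HasDerivAt (deriv ψ)
      (fderiv ℝ (fderiv ℝ g) (x + t • v) v v - h * ‖v‖ ^ 2) t := by
    intro t
    rw [hderivψ]
    convert (d2 t).sub ((hasDerivAt_id t).const_mul (h * ‖v‖ ^ 2)) using 1 <;> first | rfl | simp
  have hconv : ConvexOn ℝ univ ψ := by
    apply convexOn_univ_of_deriv2_nonneg
    · exact fun t => (dψ1 t).differentiableAt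
    · exact fun t => (dψ2 t).differentiableAt
    · intro t
      have : deriv^[2] ψ t = deriv (deriv ψ) t := by
        simp [Function.iterate_succ, Function.iterate_one]
      rw [this, (dψ2 t).deriv]
      have := hess (x + t • v)
      linarith
  have key := hconv.2 (mem_univ (0:ℝ)) (mem_univ (1:ℝ))
    (by norm_num : (0:ℝ) ≤ 1/2) (by norm_num : (0:ℝ) ≤ 1/2) (by norm_num)
  simp only [smul_eq_mul, mul_zero, mul_one, zero_add] at key
  have hψhalf : ψ (1/2) = g ((1/2 : ℝ) • x + (1/2 : ℝ) • x') - h * ‖v‖ ^ 2 / 8 := by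
    have : x + (1/2 : ℝ) • v = (1/2 : ℝ) • x + (1/2 : ℝ) • x' := by rw [hv]; module
    rw [hψ]
    simp only
    rw [this]
    ring
  have hψ0 : ψ 0 = g x := by simp [hψ]
  have hψ1 : ψ 1 = g x' - h * ‖v‖ ^ 2 / 2 := by
    have : x + v = x' := by rw [hv]; abel
    simp [hψ, this]
  have hnv : ‖v‖ = ‖x - x'‖ := by rw [hv, ← norm_neg]; congr 1; abel
  rw [hψhalf, hψ0, hψ1] at key
  rw [← hnv]
  linarith

/-- Lemma 3.7 (diameter estimate): under the same hypotheses as the gradient estimate,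
any full-dimensional region on which `f` is affine has diameter at most `(4/h)·√(εH)`;
in particular it is bounded. -/
theorem stmt2 (g f : EuclideanSpace ℝ (Fin d) → ℝ) (h H ε : ℝ)
    (hg : ContDiff ℝ 2 g) (h0 : 0 < h) (hH : h ≤ H)
    (hdd : ∀ u : EuclideanSpace ℝ (Fin d), ‖u‖ = 1 → ∀ x,
      h ≤ iteratedFDeriv ℝ 2 g x ![u, u] ∧ iteratedFDeriv ℝ 2 g x ![u, u] ≤ H)
    (hfconv : ConvexOn ℝ Set.univ f) (hfpoly : IsPolytopalFn f)
    (hfg : ∀ x, |f x - g x| < ε)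
    (Δ : Set (EuclideanSpace ℝ (Fin d))) (hΔint : (interior Δ).Nonempty)
    (m : EuclideanSpace ℝ (Fin d)) (c : ℝ) (hfa : ∀ x ∈ Δ, f x = ⟪m, x⟫ + c) :
    (∀ x ∈ Δ, ∀ x' ∈ Δ, ‖x - x'‖ ≤ 4 / h * Real.sqrt (ε * H)) ∧
    Bornology.IsBounded Δ := by
  have hε : 0 < ε := lt_of_le_of_lt (abs_nonneg _) (hfg 0)
  have hflower : ∀ y, ⟪m, y⟫ + c ≤ f y := by
    obtain ⟨z0, hz0⟩ := hΔint
    intro y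
    have hcont : ContinuousAt (fun t : ℝ => z0 + t • (y - z0)) 0 :=
      (continuous_const.add (continuous_id.smul continuous_const)).continuousAt
    have h0mem : (fun t : ℝ => z0 + t • (y - z0)) 0 ∈ interior Δ := by simpa using hz0
    have hnh := hcont.preimage_mem_nhds (isOpen_interior.mem_nhds h0mem)
    obtain ⟨δ, hδpos, hball⟩ := Metric.mem_nhds_iff.1 hnh
    set t := min (δ/2) 1 with htdef
    have ht0 : 0 < t := lt_min (by linarith) one_pos
    have ht1 : t ≤ 1 := min_le_right _ _
    have htδ : t < δ := lt_of_le_of_lt (min_le_left _ _) (by linarith)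
    have htmem : z0 + t • (y - z0) ∈ Δ := by
      apply interior_subset
      apply hball
      rw [Metric.mem_ball, Real.dist_eq, sub_zero, abs_of_pos ht0]
      exact htδ
    have hzt := hfa _ htmem
    have hz0' := hfa z0 (interior_subset hz0)
    have hcv : f ((1-t) • z0 + t • y) ≤ (1-t) * f z0 + t * f y :=
      hfconv.2 (mem_univ z0) (mem_univ y) (by linarith) ht0.le (by ring)
    have hpt : z0 + t • (y - z0) = (1-t) • z0 + t • y := by module
    have hin : ⟪m, (1-t) • z0 + t • y⟫ = (1-t) * ⟪m, z0⟫ + t * ⟪m, y⟫ := by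
      rw [inner_add_right, real_inner_smul_right, real_inner_smul_right]
    rw [hpt, hin] at hzt
    have key : t * (⟪m, y⟫ + c) ≤ t * f y := by nlinarith [hcv, hzt, hz0']
    exact le_of_mul_le_mul_left key ht0
  have hmain : ∀ x ∈ Δ, ∀ x' ∈ Δ, ‖x - x'‖ ≤ 4 / h * Real.sqrt (ε * H) := by
    intro x hx x' hx'
    have hsm := strong_midpoint g h hg (fun u hu p => (hdd u hu p).1) x x'
    have hip : ⟪m, (1/2 : ℝ) • x + (1/2 : ℝ) • x'⟫
        = 1/2 * ⟪m, x⟫ + 1/2 * ⟪m, x'⟫ := by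
      rw [inner_add_right, real_inner_smul_right, real_inner_smul_right]
    have hfmid : (1/2 : ℝ) * f x + (1/2 : ℝ) * f x' ≤ f ((1/2 : ℝ) • x + (1/2 : ℝ) • x') := by
      have := hflower ((1/2 : ℝ) • x + (1/2 : ℝ) • x')
      rw [hip] at this
      rw [hfa x hx, hfa x' hx']
      linarith
    set p := (1/2 : ℝ) • x + (1/2 : ℝ) • x' with hp
    clear_value p
    obtain ⟨h1a, h1b⟩ := abs_lt.1 (hfg x)
    obtain ⟨h2a, h2b⟩ := abs_lt.1 (hfg x')
    obtain ⟨h3a, h3b⟩ := abs_lt.1 (hfg p)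
    have hL2 : h * ‖x - x'‖ ^ 2 / 8 ≤ 2 * ε := by nlinarith [hsm, hfmid, h1a, h2a, h3b]
    have hL2' : ‖x - x'‖ ^ 2 ≤ 16 * ε / h := by
      rw [le_div_iff₀ h0]; nlinarith
    have hs1 : ‖x - x'‖ ≤ Real.sqrt (16 * ε / h) :=
      (Real.le_sqrt (norm_nonneg _) (by positivity)).2 hL2'
    refine hs1.trans ?_
    have heq : Real.sqrt ((4 / h) ^ 2 * (ε * H)) = 4 / h * Real.sqrt (ε * H) := by
      rw [Real.sqrt_mul (sq_nonneg _) (ε * H), Real.sqrt_sq (div_pos (by norm_num) h0).le]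
    rw [← heq]
    apply Real.sqrt_le_sqrt
    have hrw : (4 / h) ^ 2 * (ε * H) = 16 * (ε * H) / h ^ 2 := by
      ring
    rw [hrw, div_le_div_iff₀ h0 (pow_pos h0 2)]
    nlinarith [mul_nonneg (mul_nonneg hε.le h0.le) (sub_nonneg.2 hH)]
  refine ⟨hmain, ?_⟩
  obtain ⟨x0, hx0⟩ := hΔint
  have hx0Δ : x0 ∈ Δ := interior_subset hx0
  refine (Metric.isBounded_closedBall (x := x0) (r := 4 / h * Real.sqrt (ε * H))).subset ?_
  intro x hx
  rw [Metric.mem_closedBall, dist_eq_norm]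
  exact hmain x hx x0 hx0Δ
end
end

section
/- Let g : ℝ^d → ℝ be C² with ∇_u∇_u g(x) > h > 0 for all unit vectors u and all x. Let ℓ(x) = (∇g(p) − ε)·(x − p) + g(p) − δ be a perturbed supporting affine function at a point p, with ‖ε‖ < 1/N and 0 < δ < 1/N². Then for all x, g(x) − ℓ(x) > h‖x − p‖²/2 − ‖x − p‖/N. Consequently, for any M ∈ ℝ and any compact set V, only finitely many such affine functions (at points p of a (1/N)-lattice) exceed M somewhere on V, and the pointwise supremum of this family of affine functions is a convex piecewise-affine continuous function. -/
open Set
open scoped RealInnerProductSpace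

noncomputable section

variable {d : ℕ}

/-- An affine real function on `ℝ^d`. -/
def IsAffineFn (z : EuclideanSpace ℝ (Fin d) → ℝ) : Prop :=
  ∃ (m : EuclideanSpace ℝ (Fin d)) (c : ℝ), ∀ x, z x = ⟪m, x⟫ + c

/-- The (complete) lattice generated by a basis of `ℝ^d`. -/
def latticeOf (b : Module.Basis (Fin d) ℝ (EuclideanSpace ℝ (Fin d))) :
    Set (EuclideanSpace ℝ (Fin d)) :=
  {v | ∃ n : Fin d → ℤ, v = ∑ i, (n i : ℝ) • b i}

lemma key_taylor {d : ℕ} (g : EuclideanSpace ℝ (Fin d) → ℝ) (hg : ContDiff ℝ 2 g) (h : ℝ)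
    (hH : ∀ y v, h * ‖v‖ ^ 2 ≤ iteratedFDeriv ℝ 2 g y ![v, v]) (p x : EuclideanSpace ℝ (Fin d)) :
    g p + ⟪gradient g p, x - p⟫ + h / 2 * ‖x - p‖ ^ 2 ≤ g x := by
  set v := x - p with hv
  set L : ℝ → EuclideanSpace ℝ (Fin d) := fun t => p + t • v with hLdef
  have hgd : Differentiable ℝ g := hg.differentiable (by norm_num)
  have hL : ∀ t, HasDerivAt L v t := by
    intro t
    have hh := ((hasDerivAt_id t).smul_const v).const_add p
    rw [one_smul] at hh
    exact hh
  set φ₁ : ℝ → ℝ := fun t => (fderiv ℝ g (L t)) v with hφ₁def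
  have hφ : ∀ t : ℝ, HasDerivAt (fun t => g (L t)) (φ₁ t) t := fun t =>
    (hgd (L t)).hasFDerivAt.comp_hasDerivAt t (hL t)
  have hF : ContDiff ℝ 1 (fderiv ℝ g) := hg.fderiv_right (by norm_num)
  have hφ₁ : ∀ t : ℝ, HasDerivAt φ₁ (iteratedFDeriv ℝ 2 g (L t) ![v, v]) t := by
    intro t
    have h1 : HasDerivAt (fun t => fderiv ℝ g (L t)) (fderiv ℝ (fderiv ℝ g) (L t) v) t :=
      (hF.differentiable (by norm_num) (L t)).hasFDerivAt.comp_hasDerivAt t (hL t)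
    have h2 := h1.clm_apply (hasDerivAt_const t v)
    simp only [map_zero, add_zero] at h2
    have h3 : iteratedFDeriv ℝ 2 g (L t) ![v, v] = fderiv ℝ (fderiv ℝ g) (L t) v v := by
      rw [iteratedFDeriv_two_apply]; rfl
    rw [h3]; exact h2
  set c : ℝ := h * ‖v‖ ^ 2 with hc
  set ψ : ℝ → ℝ := fun t => g (L t) - c / 2 * t ^ 2 with hψdef
  set ψ₁ : ℝ → ℝ := fun t => φ₁ t - c * t with hψ₁def
  have hψ : ∀ t : ℝ, HasDerivAt ψ (ψ₁ t) t := by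
    intro t
    have := (hφ t).sub (((hasDerivAt_pow 2 t).const_mul (c / 2)))
    exact this.congr_deriv (by simp only [hψ₁def]; norm_num; ring)
  have hψ₁' : ∀ t : ℝ, HasDerivAt ψ₁ (iteratedFDeriv ℝ 2 g (L t) ![v, v] - c) t := by
    intro t
    have := (hφ₁ t).sub (((hasDerivAt_id t).const_mul c))
    exact this.congr_deriv (by ring)
  have hψ₁mono : Monotone ψ₁ := by
    apply monotone_of_deriv_nonneg
    · exact fun t => (hψ₁' t).differentiableAt
    · intro t
      rw [(hψ₁' t).deriv]
      have := hH (L t) v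
      linarith
  have hcont : ContinuousOn ψ (Icc 0 1) := fun t _ => ((hψ t).continuousAt).continuousWithinAt
  obtain ⟨t, ht, hts⟩ := exists_deriv_eq_slope ψ (by norm_num : (0:ℝ) < 1) hcont
    (fun t _ => ((hψ t).differentiableAt).differentiableWithinAt)
  rw [(hψ t).deriv] at hts
  have h1 : ψ₁ 0 ≤ ψ₁ t := hψ₁mono ht.1.le
  have hL0 : L 0 = p := by simp [hLdef]
  have hL1 : L 1 = x := by simp [hLdef, hv]
  have hψ0 : ψ 0 = g p := by simp [hψdef, hL0]
  have hψ1 : ψ 1 = g x - c / 2 := by simp [hψdef, hL1]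
  have hgrad : ⟪gradient g p, v⟫ = φ₁ 0 := by
    simp [hφ₁def, hL0, gradient, InnerProductSpace.toDual_symm_apply]
  have hψ₁0 : ψ₁ 0 = φ₁ 0 := by simp [hψ₁def]
  rw [hψ0, hψ1, sub_zero, div_one] at hts
  rw [hψ₁0] at h1
  rw [hgrad]
  have h2 : φ₁ 0 ≤ g x - c / 2 - g p := by
    have : ψ₁ t = g x - c / 2 - g p := hts
    calc φ₁ 0 = ψ₁ 0 - 0 := by simp [hψ₁def]
    _ ≤ ψ₁ t := by simpa [hψ₁def] using h1
    _ = g x - c / 2 - g p := this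
  linarith

/-- The lower-bound inequality for perturbed supporting affine functions of a uniformly
strictly convex function, together with its consequences: local finiteness of the
family on compact sets, and convexity/continuity/piecewise-affineness of the pointwise
supremum. -/
theorem stmt8 (b : Module.Basis (Fin d) ℝ (EuclideanSpace ℝ (Fin d)))
    (g : EuclideanSpace ℝ (Fin d) → ℝ) (hg : ContDiff ℝ 2 g)
    (h : ℝ) (h0 : 0 < h)
    (hHess : ∀ u : EuclideanSpace ℝ (Fin d), ‖u‖ = 1 → ∀ x,
      h < iteratedFDeriv ℝ 2 g x ![u, u])
    (N : ℕ) (hN : 0 < N)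
    (ε : (Fin d → ℤ) → EuclideanSpace ℝ (Fin d)) (δ : (Fin d → ℤ) → ℝ)
    (hε : ∀ j, ‖ε j‖ < 1 / N) (hδ : ∀ j, 0 < δ j ∧ δ j < 1 / (N ^ 2))
    (P : (Fin d → ℤ) → EuclideanSpace ℝ (Fin d))
    (hP : ∀ j, P j = ∑ i, ((j i : ℝ) / N) • b i)
    (ℓ : (Fin d → ℤ) → EuclideanSpace ℝ (Fin d) → ℝ)
    (hℓ : ∀ j x, ℓ j x = ⟪gradient g (P j) - ε j, x - P j⟫ + g (P j) - δ j) :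
    (∀ j x, h * ‖x - P j‖ ^ 2 / 2 - ‖x - P j‖ / N < g x - ℓ j x) ∧
    (∀ (M : ℝ) (V : Set (EuclideanSpace ℝ (Fin d))), IsCompact V →
      {j : Fin d → ℤ | ∃ x ∈ V, M ≤ ℓ j x}.Finite) ∧
    ConvexOn ℝ Set.univ (fun x => ⨆ j, ℓ j x) ∧
    Continuous (fun x => ⨆ j, ℓ j x) ∧
    (∀ V : Set (EuclideanSpace ℝ (Fin d)), IsCompact V →
      ∃ (J : Finset (Fin d → ℤ)) (hJ : J.Nonempty),
        ∀ x ∈ V, (⨆ j, ℓ j x) = J.sup' hJ fun j => ℓ j x) := by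
  have hN' : (0:ℝ) < N := by exact_mod_cast hN
  -- Hessian lower bound for all vectors
  have hH : ∀ y v, h * ‖v‖ ^ 2 ≤ iteratedFDeriv ℝ 2 g y ![v, v] := by
    intro y v
    rcases eq_or_ne v 0 with rfl | hv
    · simp [ContinuousMultilinearMap.map_coord_zero (iteratedFDeriv ℝ 2 g y)
        (i := (0 : Fin 2)) (by simp : ![(0 : EuclideanSpace ℝ (Fin d)), 0] 0 = 0)]
    · set u := ‖v‖⁻¹ • v with hu
      have hun : ‖u‖ = 1 := by
        rw [hu, norm_smul, norm_inv, norm_norm, inv_mul_cancel₀ (norm_ne_zero_iff.mpr hv)]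
      have hval := hHess u hun y
      have he : ![v, v] = fun i => ‖v‖ • ![u, u] i := by
        funext i
        fin_cases i <;>
          simp [hu, smul_smul, mul_inv_cancel₀ (norm_ne_zero_iff.mpr hv)]
      have hms := (iteratedFDeriv ℝ 2 g y).map_smul_univ (fun _ : Fin 2 => ‖v‖) ![u, u]
      rw [he, hms]
      have hnv : (0:ℝ) < ‖v‖ ^ 2 := by
        have := norm_pos_iff.mpr hv
        positivity
      simp only [Finset.prod_const, Finset.card_univ, Fintype.card_fin, smul_eq_mul]
      rw [show (‖v‖ ^ 2 : ℝ) = ‖v‖ ^ 2 from rfl]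
      nlinarith [hval, hnv]
  -- Part 1
  have part1 : ∀ j x, h * ‖x - P j‖ ^ 2 / 2 - ‖x - P j‖ / N < g x - ℓ j x := by
    intro j x
    have hk := key_taylor g hg h hH (P j) x
    have hinner : |⟪ε j, x - P j⟫| ≤ ‖ε j‖ * ‖x - P j‖ := abs_real_inner_le_norm _ _
    have hεr : ‖ε j‖ * ‖x - P j‖ ≤ ‖x - P j‖ / N := by
      rw [div_eq_mul_inv, ← one_div]
      exact mul_le_mul_of_nonneg_right (hε j).le (norm_nonneg _) |>.trans_eq (mul_comm _ _)
    have hsub : ⟪gradient g (P j) - ε j, x - P j⟫ =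
        ⟪gradient g (P j), x - P j⟫ - ⟪ε j, x - P j⟫ := inner_sub_left _ _ _
    rw [hℓ, hsub]
    have habs := abs_le.mp hinner
    have hδ1 := (hδ j).1
    nlinarith [hk, habs.1, hεr, hδ1]
  -- uniform upper bound for ℓ j x
  have hub : ∀ x j, ℓ j x ≤ g x + 1 / (2 * h * N ^ 2) := by
    intro x j
    have h1 := part1 j x
    have h2 : ‖x - P j‖ / N - h * ‖x - P j‖ ^ 2 / 2 ≤ 1 / (2 * h * N ^ 2) := by
      set r : ℝ := ‖x - P j‖ with hrr
      rw [div_sub_div _ _ (ne_of_gt hN') (two_ne_zero), div_le_div_iff₀ (by positivity) (by positivity)]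
      nlinarith [mul_nonneg hN'.le (sq_nonneg (h * N * r - 1)), hN', h0]
    linarith
  have hBdd : ∀ x, BddAbove (range fun j => ℓ j x) := by
    intro x
    exact ⟨g x + 1 / (2 * h * N ^ 2), forall_mem_range.mpr fun j => hub x j⟩
  -- affine identity
  have haff : ∀ j (a bb : ℝ) x y, a + bb = 1 →
      ℓ j (a • x + bb • y) = a * ℓ j x + bb * ℓ j y := by
    intro j a bb x y hab
    have hb' : bb = 1 - a := by linarith
    subst hb'
    have hdecomp : a • x + (1 - a) • y - P j = a • (x - P j) + (1 - a) • (y - P j) := by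
      module
    rw [hℓ, hℓ, hℓ, hdecomp, inner_add_right, real_inner_smul_right, real_inner_smul_right]
    ring
  -- continuity of each ℓ j
  have hcontℓ : ∀ j, Continuous (ℓ j) := by
    intro j
    have : ℓ j = fun x => ⟪gradient g (P j) - ε j, x - P j⟫ + g (P j) - δ j := funext (hℓ j)
    rw [this]
    exact ((continuous_const.inner (continuous_id.sub continuous_const)).add
      continuous_const).sub continuous_const
  -- Part 2 : finiteness
  have part2 : ∀ (M : ℝ) (V : Set (EuclideanSpace ℝ (Fin d))), IsCompact V →
      {j : Fin d → ℤ | ∃ x ∈ V, M ≤ ℓ j x}.Finite := by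
    intro M V hV
    rcases V.eq_empty_or_nonempty with rfl | hVne
    · simp
    obtain ⟨C, hC⟩ := isBounded_iff_forall_norm_le.mp (hV.image hg.continuous).isBounded
    obtain ⟨B, hB⟩ := isBounded_iff_forall_norm_le.mp hV.isBounded
    set K : ℝ := C + |M| with hK
    have hK0 : 0 ≤ K := by
      obtain ⟨x₀, hx₀⟩ := hVne
      have h1 := hC (g x₀) ⟨x₀, hx₀, rfl⟩
      have h2 := abs_nonneg M
      have h3 := norm_nonneg (g x₀)
      rw [hK]; linarith
    set R : ℝ := Real.sqrt (4 * (K + 1 / (h * N ^ 2)) / h) with hR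
    -- any j in the set has ‖P j‖ ≤ B + R
    have hPbound : ∀ j ∈ {j : Fin d → ℤ | ∃ x ∈ V, M ≤ ℓ j x}, ‖P j‖ ≤ B + R := by
      rintro j ⟨x, hxV, hMx⟩
      set r : ℝ := ‖x - P j‖ with hr
      have h1 := part1 j x
      have hgx : g x ≤ C := (le_abs_self _).trans (hC (g x) ⟨x, hxV, rfl⟩)
      have h2 : h * r ^ 2 / 2 - r / N < K := by
        rw [hK]
        have hrw : h * r ^ 2 / 2 - r / N < g x - ℓ j x := by rw [hr]; exact h1
        linarith [neg_abs_le M]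
      have hamgm : r / N ≤ h * r ^ 2 / 4 + 1 / (h * N ^ 2) := by
        rw [div_add_div _ _ (by norm_num : (4:ℝ) ≠ 0) (by positivity : (h * (N:ℝ) ^ 2) ≠ 0),
          div_le_div_iff₀ hN' (by positivity)]
        nlinarith [mul_nonneg hN'.le (sq_nonneg (h * N * r - 2)), hN', h0]
      have hr2 : r ^ 2 ≤ 4 * (K + 1 / (h * N ^ 2)) / h := by
        rw [le_div_iff₀ h0]
        nlinarith
      have hrR : r ≤ R := by
        rw [hR]
        exact Real.le_sqrt_of_sq_le hr2
      calc ‖P j‖ = ‖x - (x - P j)‖ := by rw [sub_sub_cancel]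
      _ ≤ ‖x‖ + ‖x - P j‖ := norm_sub_le _ _
      _ ≤ B + R := add_le_add (hB x hxV) hrR
    -- bound the integer coordinates
    set T : EuclideanSpace ℝ (Fin d) →L[ℝ] (Fin d → ℝ) :=
      LinearMap.toContinuousLinearMap (b.equivFun : _ →ₗ[ℝ] _) with hT
    have hTcoord : ∀ j i, (j i : ℝ) / N = T (P j) i := by
      intro j i
      have : P j = ∑ i, ((j i : ℝ) / N) • b i := hP j
      rw [hT]
      simp only [LinearMap.coe_toContinuousLinearMap', LinearEquiv.coe_coe, this,
        Module.Basis.equivFun_apply, Module.Basis.repr_sum_self]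
    set Q : ℝ := (N : ℝ) * (‖T‖ * (B + R)) with hQ
    have hcoord : ∀ j ∈ {j : Fin d → ℤ | ∃ x ∈ V, M ≤ ℓ j x}, ∀ i, |(j i : ℝ)| ≤ Q := by
      intro j hj i
      have h1 : |(j i : ℝ) / N| ≤ ‖T (P j)‖ := by
        rw [hTcoord j i]
        calc |T (P j) i| = ‖T (P j) i‖ := (Real.norm_eq_abs _).symm
        _ ≤ ‖T (P j)‖ := norm_le_pi_norm _ i
      have h2 : ‖T (P j)‖ ≤ ‖T‖ * (B + R) := by
        calc ‖T (P j)‖ ≤ ‖T‖ * ‖P j‖ := T.le_opNorm _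
        _ ≤ ‖T‖ * (B + R) := by
            exact mul_le_mul_of_nonneg_left (hPbound j hj) (norm_nonneg T)
      have h3 : |(j i : ℝ)| = (N : ℝ) * |(j i : ℝ) / N| := by
        rw [abs_div, abs_of_nonneg hN'.le]
        field_simp
      rw [h3, hQ]
      exact mul_le_mul_of_nonneg_left (h1.trans h2) hN'.le
    -- conclude finiteness
    set m : ℤ := ⌈Q⌉ with hm
    have hsubset : {j : Fin d → ℤ | ∃ x ∈ V, M ≤ ℓ j x} ⊆
        Set.pi Set.univ (fun _ : Fin d => Set.Icc (-m) m) := by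
      intro j hj
      intro i _
      have := hcoord j hj i
      have habs : |j i| ≤ m := by
        have : (|j i| : ℝ) ≤ Q := by
          push_cast
          exact this
        exact_mod_cast this.trans (Int.le_ceil Q)
      exact abs_le.mp habs
    exact Set.Finite.subset (Set.Finite.pi fun _ => Set.finite_Icc _ _) hsubset
  -- Part 5 : finite sup on compact sets
  have part5 : ∀ V : Set (EuclideanSpace ℝ (Fin d)), IsCompact V →
      ∃ (J : Finset (Fin d → ℤ)) (hJ : J.Nonempty),
        ∀ x ∈ V, (⨆ j, ℓ j x) = J.sup' hJ fun j => ℓ j x := by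
    intro V hV
    rcases V.eq_empty_or_nonempty with rfl | hVne
    · exact ⟨{fun _ => 0}, Finset.singleton_nonempty _, by simp⟩
    set j₀ : Fin d → ℤ := fun _ => 0 with hj₀
    obtain ⟨z, hzV, hzmin⟩ := hV.exists_isMinOn hVne (hcontℓ j₀).continuousOn
    have hfin := part2 (ℓ j₀ z) V hV
    have hj₀mem : j₀ ∈ {j : Fin d → ℤ | ∃ x ∈ V, ℓ j₀ z ≤ ℓ j x} := ⟨z, hzV, le_refl _⟩
    set J : Finset (Fin d → ℤ) := hfin.toFinset with hJdef
    have hJne : J.Nonempty := ⟨j₀, hfin.mem_toFinset.mpr hj₀mem⟩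
    refine ⟨J, hJne, fun x hx => ?_⟩
    apply le_antisymm
    · refine ciSup_le fun j => ?_
      by_cases hj : j ∈ J
      · exact Finset.le_sup' (fun j => ℓ j x) hj
      · have hnot : ¬ ∃ y ∈ V, ℓ j₀ z ≤ ℓ j y := by
          intro hcon
          exact hj (hfin.mem_toFinset.mpr hcon)
        push_neg at hnot
        have h1 : ℓ j x < ℓ j₀ z := hnot x hx
        have h2 : ℓ j₀ z ≤ ℓ j₀ x := hzmin hx
        exact (h1.le.trans h2).trans
          (Finset.le_sup' (fun j => ℓ j x) (hfin.mem_toFinset.mpr hj₀mem))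
    · exact Finset.sup'_le _ _ fun j _ => le_ciSup (hBdd x) j
  refine ⟨part1, part2, ?_, ?_, part5⟩
  · -- convexity
    refine ⟨convex_univ, fun x _ y _ a bb ha hb hab => ?_⟩
    simp only [smul_eq_mul]
    refine ciSup_le fun j => ?_
    rw [haff j a bb x y hab]
    exact add_le_add (mul_le_mul_of_nonneg_left (le_ciSup (hBdd x) j) ha)
      (mul_le_mul_of_nonneg_left (le_ciSup (hBdd y) j) hb)
  · -- continuity
    rw [continuous_iff_continuousAt]
    intro x₀
    obtain ⟨J, hJ, hEq⟩ := part5 (Metric.closedBall x₀ 1) (isCompact_closedBall x₀ 1)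
    have hc : ContinuousAt (fun x => J.sup' hJ fun j => ℓ j x) x₀ :=
      ContinuousAt.finset_sup'_apply hJ fun j _ => (hcontℓ j).continuousAt
    apply hc.congr
    filter_upwards [Metric.ball_mem_nhds x₀ one_pos] with y hy
    exact (hEq y (Metric.ball_subset_closedBall hy)).symm
end
end

section
/- Let g : ℝ^d → ℝ be C² with second directional derivatives bounded above by H (i.e., ∇_u∇_u g(x) < H for all unit u and x). With notation as in the approximation construction: for each x there is a lattice point λ_j with ‖λ_j − x‖ ≤ R/N (R the diameter of a fundamental domain), and g^{(N)}(x) = sup_j g^{(N)}_{λ_j}(x) is the supremum of perturbed supporting affine functions with perturbation sizes < 1/N and < 1/N². Then 0 ≤ g(x) − g^{(N)}(x) < (R²·H + 2R + 2)/(2N²) for all x ∈ ℝ^d. In particular g^{(N)} → g uniformly as N → ∞. -/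
open Set
open scoped RealInnerProductSpace

noncomputable section

lemma taylor_aux (g : EuclideanSpace ℝ (Fin d) → ℝ) (hg : ContDiff ℝ 2 g)
    (H : ℝ) (hH0 : 0 ≤ H)
    (hHess : ∀ u : EuclideanSpace ℝ (Fin d), ‖u‖ = 1 → ∀ x,
      iteratedFDeriv ℝ 2 g x ![u, u] < H)
    (p v : EuclideanSpace ℝ (Fin d)) :
    g (p + v) ≤ g p + fderiv ℝ g p v + H * ‖v‖ ^ 2 / 2 := by
  rcases eq_or_ne v 0 with rfl | hv
  · simp [mul_nonneg hH0]
  have hdg : Differentiable ℝ g := hg.differentiable (by norm_num)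
  have hdg' : Differentiable ℝ (fderiv ℝ g) :=
    (hg.fderiv_right (m := 1) (by norm_num)).differentiable (by norm_num)
  have line : ∀ t : ℝ, HasDerivAt (fun s : ℝ => p + s • v) v t := by
    intro t
    simpa using ((hasDerivAt_id t).smul_const v).const_add p
  set φ' : ℝ → ℝ := fun t => fderiv ℝ g (p + t • v) v with hφ'def
  have hφ : ∀ t : ℝ, HasDerivAt (fun s : ℝ => g (p + s • v)) (φ' t) t := fun t =>
    ((hdg (p + t • v)).hasFDerivAt).comp_hasDerivAt t (line t)
  have hφ'' : ∀ t : ℝ, HasDerivAt φ'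
      (fderiv ℝ (fderiv ℝ g) (p + t • v) v v) t := by
    intro t
    have hA : HasDerivAt (fun s : ℝ => fderiv ℝ g (p + s • v))
        (fderiv ℝ (fderiv ℝ g) (p + t • v) v) t :=
      ((hdg' (p + t • v)).hasFDerivAt).comp_hasDerivAt t (line t)
    simpa using hA.clm_apply (hasDerivAt_const t v)
  have hbound : ∀ y, fderiv ℝ (fderiv ℝ g) y v v ≤ H * ‖v‖ ^ 2 := by
    intro y
    have hvn : 0 < ‖v‖ := norm_pos_iff.mpr hv
    set u : EuclideanSpace ℝ (Fin d) := ‖v‖⁻¹ • v with hu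
    have hun : ‖u‖ = 1 := by
      rw [hu, norm_smul, norm_inv, norm_norm, inv_mul_cancel₀ hvn.ne']
    have hveq : (![v, v] : Fin 2 → EuclideanSpace ℝ (Fin d)) =
        fun i => ‖v‖ • (![u, u] : Fin 2 → _) i := by
      funext i
      fin_cases i <;> simp [hu, smul_smul, mul_inv_cancel₀ hvn.ne']
    have h2 : iteratedFDeriv ℝ 2 g y ![v, v]
        = ‖v‖ ^ 2 * iteratedFDeriv ℝ 2 g y ![u, u] := by
      rw [hveq, ContinuousMultilinearMap.map_smul_univ]
      simp [sq]
    have := hHess u hun y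
    have hlt : iteratedFDeriv ℝ 2 g y ![v, v] < ‖v‖ ^ 2 * H := by
      rw [h2]
      exact mul_lt_mul_of_pos_left this (by positivity)
    have heq : iteratedFDeriv ℝ 2 g y ![v, v] = fderiv ℝ (fderiv ℝ g) y v v := by
      rw [iteratedFDeriv_two_apply]; simp
    rw [← heq]
    linarith [hlt]
  -- step A : φ' t ≤ φ' 0 + H‖v‖² t for t ≥ 0
  have hstepA : ∀ t : ℝ, 0 ≤ t → φ' t ≤ φ' 0 + H * ‖v‖ ^ 2 * t := by
    intro t ht
    have hh : ∀ s : ℝ, HasDerivAt (fun r => H * ‖v‖ ^ 2 * r - φ' r)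
        (H * ‖v‖ ^ 2 - fderiv ℝ (fderiv ℝ g) (p + s • v) v v) s := by
      intro s
      exact ((((hasDerivAt_id s).const_mul (H * ‖v‖ ^ 2)).sub (hφ'' s))).congr_deriv (by ring)
    have hmono : Monotone (fun r => H * ‖v‖ ^ 2 * r - φ' r) := by
      apply monotone_of_deriv_nonneg
      · exact fun s => (hh s).differentiableAt
      · intro s
        rw [(hh s).deriv]
        linarith [hbound (p + s • v)]
    have := hmono ht
    simp only at this
    linarith
  -- step B
  set ψ : ℝ → ℝ := fun t => g p + t * φ' 0 + H * ‖v‖ ^ 2 * t ^ 2 / 2 - g (p + t • v)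
    with hψdef
  have hψ' : ∀ t : ℝ, HasDerivAt ψ (φ' 0 + H * ‖v‖ ^ 2 * t - φ' t) t := by
    intro t
    have h1 : HasDerivAt (fun s : ℝ => g p + s * φ' 0 + H * ‖v‖ ^ 2 * s ^ 2 / 2)
        (φ' 0 + H * ‖v‖ ^ 2 * t) t := by
      have := (((hasDerivAt_id t).mul_const (φ' 0)).const_add (g p)).add
        (((hasDerivAt_pow 2 t).const_mul (H * ‖v‖ ^ 2)).div_const 2)
      refine this.congr_deriv ?_
      norm_num
      ring
    exact h1.sub (hφ t)
  have hψmono : MonotoneOn ψ (Ici (0:ℝ)) := by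
    apply monotoneOn_of_deriv_nonneg (convex_Ici 0)
    · exact (fun t _ => ((hψ' t).differentiableAt).continuousAt.continuousWithinAt)
    · exact fun t _ => ((hψ' t).differentiableAt).differentiableWithinAt
    · intro t ht
      rw [interior_Ici] at ht
      rw [(hψ' t).deriv]
      have := hstepA t ht.le
      linarith
  have h01 := hψmono (self_mem_Ici) (mem_Ici.mpr zero_le_one) zero_le_one
  have h0 : φ' 0 = fderiv ℝ g p v := by simp [hφ'def]
  simp only [hψdef, zero_smul, add_zero, one_smul, zero_mul, mul_zero,
    one_pow, mul_one, zero_pow, one_mul] at h01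
  rw [h0] at h01
  linarith


variable {d : ℕ}

/-- Lemma 3.5 (approximation bound): if the perturbed supporting affine minorants
`ℓ_j ≤ g` are taken at `(1/N)`-lattice points which are `R/N`-dense, then
`0 ≤ g − g^{(N)} < (R²H + 2R + 2)/(2N²)` for `g^{(N)} = sup_j ℓ_j`. -/
theorem stmt9 (b : Module.Basis (Fin d) ℝ (EuclideanSpace ℝ (Fin d)))
    (g : EuclideanSpace ℝ (Fin d) → ℝ) (hg : ContDiff ℝ 2 g)
    (H : ℝ) (hH0 : 0 < H)
    (hHess : ∀ u : EuclideanSpace ℝ (Fin d), ‖u‖ = 1 → ∀ x,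
      iteratedFDeriv ℝ 2 g x ![u, u] < H)
    (N : ℕ) (hN : 0 < N) (R : ℝ) (hR : 0 ≤ R)
    (ε : (Fin d → ℤ) → EuclideanSpace ℝ (Fin d)) (δ : (Fin d → ℤ) → ℝ)
    (hε : ∀ j, ‖ε j‖ < 1 / N) (hδ : ∀ j, 0 < δ j ∧ δ j < 1 / (N ^ 2))
    (P : (Fin d → ℤ) → EuclideanSpace ℝ (Fin d))
    (hP : ∀ j, P j = ∑ i, ((j i : ℝ) / N) • b i)
    (hdense : ∀ x, ∃ j, ‖P j - x‖ ≤ R / N)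
    (ℓ : (Fin d → ℤ) → EuclideanSpace ℝ (Fin d) → ℝ)
    (hℓ : ∀ j x, ℓ j x = ⟪gradient g (P j) - ε j, x - P j⟫ + g (P j) - δ j)
    (hle : ∀ j x, ℓ j x ≤ g x) :
    ∀ x, 0 ≤ g x - (⨆ j, ℓ j x) ∧
      g x - (⨆ j, ℓ j x) < (R ^ 2 * H + 2 * R + 2) / (2 * N ^ 2) := by
  intro x
  have hNR : (0:ℝ) < N := by exact_mod_cast hN
  have hbdd : BddAbove (Set.range fun j => ℓ j x) := by
    refine ⟨g x, ?_⟩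
    rintro y ⟨j, rfl⟩
    exact hle j x
  have hsup_le : (⨆ j, ℓ j x) ≤ g x := ciSup_le (fun j => hle j x)
  refine ⟨by linarith, ?_⟩
  obtain ⟨j, hj⟩ := hdense x
  have hsup_ge : ℓ j x ≤ ⨆ j, ℓ j x := le_ciSup hbdd j
  set p := P j
  set v := x - p with hv
  have hxpv : x = p + v := by simp [hv]
  have hgr : ⟪gradient g p, v⟫ = fderiv ℝ g p v := by
    simp [gradient, InnerProductSpace.toDual_symm_apply]
  have htay : g x ≤ g p + ⟪gradient g p, v⟫ + H * ‖v‖ ^ 2 / 2 := by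
    rw [hgr, hxpv]
    exact taylor_aux g hg H hH0.le hHess p v
  have hℓj : ℓ j x = ⟪gradient g p, v⟫ - ⟪ε j, v⟫ + g p - δ j := by
    rw [hℓ j x, inner_sub_left]
  have hnv : ‖v‖ ≤ R / N := by rw [hv, norm_sub_rev]; exact hj
  have h1 : ⟪ε j, v⟫ ≤ (1 / N) * (R / N) := by
    calc ⟪ε j, v⟫ ≤ ‖ε j‖ * ‖v‖ := real_inner_le_norm _ _
    _ ≤ (1 / N) * (R / N) :=
      mul_le_mul (hε j).le hnv (norm_nonneg _) (by positivity)
  have h2 : H * ‖v‖ ^ 2 / 2 ≤ H * (R / N) ^ 2 / 2 := by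
    have : ‖v‖ ^ 2 ≤ (R / N) ^ 2 := by
      apply pow_le_pow_left₀ (norm_nonneg _) hnv
    nlinarith
  have h3 := (hδ j).2
  have key : g x - ℓ j x < (R ^ 2 * H + 2 * R + 2) / (2 * N ^ 2) := by
    rw [hℓj]
    have hN2 : (0:ℝ) < (N:ℝ) ^ 2 := by positivity
    have e1 : H * (R / N) ^ 2 / 2 + (1 / N) * (R / N) + 1 / (N ^ 2)
        = (R ^ 2 * H + 2 * R + 2) / (2 * N ^ 2) := by
      field_simp
    have h3' : δ j < 1 / ((N:ℝ) ^ 2) := by exact_mod_cast h3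
    linarith
  linarith
end
end

section
/- On the complex torus 𝔸 = ℂ^d/(Λ ⊕ iΛ) with the translation-invariant Kähler metric induced by a positive-definite form, suppose φ̂ is the unique (up to constant, normalized by ∫φ̂ = 0) solution of the complex Monge–Ampère equation det(g_{αβ̄} + ∂²φ̂/∂z_α∂z̄_β) = C·e^{f(x)} where the datum f depends only on the real part x = Re(z). Then φ̂ is invariant under all imaginary translations z ↦ z + iy₀ (y₀ ∈ ℝ^d/Λ), i.e., ∂φ̂/∂y_i ≡ 0 for all i, and hence φ̂ depends only on x and the restriction φ(x) = φ̂(x, 0) solves the real Monge–Ampère equation det(g_{ij} + ∂²φ/∂x_i∂x_j) = C'·e^{f(x)}. -/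
open Set MeasureTheory
open scoped RealInnerProductSpace

noncomputable section

variable {d : ℕ}

/-- The fundamental domain `{x₁λ₁+⋯+x_dλ_d : 0 ≤ x_i < 1}` of the lattice. -/
def fundDomain (b : Module.Basis (Fin d) ℝ (EuclideanSpace ℝ (Fin d))) :
    Set (EuclideanSpace ℝ (Fin d)) :=
  (fun t : Fin d → ℝ => ∑ i, t i • b i) '' (Set.univ.pi fun _ => Set.Ico (0 : ℝ) 1)

/-- The second partial derivative `∂²g/∂x_i∂x_j` at `x`. -/
def pd2 (g : EuclideanSpace ℝ (Fin d) → ℝ) (i j : Fin d)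
    (x : EuclideanSpace ℝ (Fin d)) : ℝ :=
  iteratedFDeriv ℝ 2 g x ![EuclideanSpace.single i 1, EuclideanSpace.single j 1]

open scoped ComplexOrder

/-- Second derivative of a function on `ℝ^d × ℝ^d` in a pair of directions. -/
def pd2' (u : EuclideanSpace ℝ (Fin d) × EuclideanSpace ℝ (Fin d) → ℝ)
    (v w p : EuclideanSpace ℝ (Fin d) × EuclideanSpace ℝ (Fin d)) : ℝ :=
  iteratedFDeriv ℝ 2 u p ![v, w]

/-- The real coordinate direction `∂/∂x_i` on `ℝ^d × ℝ^d`. -/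
def dirX (i : Fin d) : EuclideanSpace ℝ (Fin d) × EuclideanSpace ℝ (Fin d) :=
  (EuclideanSpace.single i 1, 0)

/-- The imaginary coordinate direction `∂/∂y_i` on `ℝ^d × ℝ^d`. -/
def dirY (i : Fin d) : EuclideanSpace ℝ (Fin d) × EuclideanSpace ℝ (Fin d) :=
  (0, EuclideanSpace.single i 1)

/-- The complex Hessian entry `∂²u/∂z_α∂z̄_β
  = ¼(u_{x_αx_β} + u_{y_αy_β} + i(u_{x_αy_β} − u_{y_αx_β}))`
of a real function on `ℝ^d × ℝ^d ≅ ℂ^d` (with `z = x + iy`). -/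
def cHess (u : EuclideanSpace ℝ (Fin d) × EuclideanSpace ℝ (Fin d) → ℝ)
    (α β : Fin d) (p : EuclideanSpace ℝ (Fin d) × EuclideanSpace ℝ (Fin d)) : ℂ :=
  (1 / 4 : ℂ) * ((pd2' u (dirX α) (dirX β) p + pd2' u (dirY α) (dirY β) p : ℝ) : ℂ) +
    (Complex.I / 4) * ((pd2' u (dirX α) (dirY β) p - pd2' u (dirY α) (dirX β) p : ℝ) : ℂ)

/-! ### Auxiliary lemmas -/

open scoped Pointwise

/-- Iterated derivatives of a translate. -/
lemma itfd_shift {E F : Type*} [NormedAddCommGroup E] [NormedSpace ℝ E]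
    [NormedAddCommGroup F] [NormedSpace ℝ F] {f : E → F} {N : WithTop ℕ∞}
    (hf : ContDiff ℝ N f) (c : E) :
    ∀ n : ℕ, (n : WithTop ℕ∞) ≤ N → ∀ x,
      iteratedFDeriv ℝ n (fun p => f (p + c)) x = iteratedFDeriv ℝ n f (x + c) := by
  intro n
  induction n with
  | zero => intro _ x; ext m; simp
  | succ n IH =>
    intro hn x
    have hn' : (n : WithTop ℕ∞) ≤ N := le_trans (by exact_mod_cast Nat.le_succ n) hn
    have hlt : (n : WithTop ℕ∞) < N := lt_of_lt_of_le (by exact_mod_cast Nat.lt_succ_self n) hn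
    have hdiff : Differentiable ℝ (iteratedFDeriv ℝ n f) :=
      hf.differentiable_iteratedFDeriv hlt
    have heq : iteratedFDeriv ℝ n (fun p => f (p + c)) =
        fun x => iteratedFDeriv ℝ n f (x + c) := funext (IH hn')
    ext m
    rw [iteratedFDeriv_succ_apply_left, iteratedFDeriv_succ_apply_left, heq]
    have h1 : HasFDerivAt (fun x : E => x + c) (ContinuousLinearMap.id ℝ E) x :=
      (hasFDerivAt_id x).add_const c
    have h2 : HasFDerivAt (fun x => iteratedFDeriv ℝ n f (x + c))
        (fderiv ℝ (iteratedFDeriv ℝ n f) (x + c)) x := by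
      exact ((hdiff (x + c)).hasFDerivAt.comp x h1)
    rw [h2.fderiv]

lemma fundDomain_eq (b : Module.Basis (Fin d) ℝ (EuclideanSpace ℝ (Fin d))) :
    fundDomain b = ZSpan.fundamentalDomain b := by
  ext x
  constructor
  · rintro ⟨t, ht, rfl⟩
    simp only [ZSpan.mem_fundamentalDomain]
    intro i
    have h1 : (b.repr (∑ j, t j • b j)) i = t i := by rw [b.repr_sum_self]
    rw [h1]
    exact ht i (Set.mem_univ i)
  · intro h
    exact ⟨fun i => b.repr x i, fun i _ => h i, by simpa using b.sum_repr x⟩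

lemma span_sub_lattice (b : Module.Basis (Fin d) ℝ (EuclideanSpace ℝ (Fin d))) :
    ∀ v ∈ Submodule.span ℤ (Set.range ⇑b), v ∈ latticeOf b := by
  intro v hv
  rw [Submodule.mem_span_range_iff_exists_fun] at hv
  obtain ⟨c, hc⟩ := hv
  exact ⟨c, by rw [← hc]; congr 1; ext i; rw [Int.cast_smul_eq_zsmul]⟩

/-- The integral of a lattice-periodic function over the fundamental domain
is translation invariant. -/
lemma integral_fd_translate (b : Module.Basis (Fin d) ℝ (EuclideanSpace ℝ (Fin d)))
    (g : EuclideanSpace ℝ (Fin d) → ℝ)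
    (hg : ∀ l ∈ latticeOf b, ∀ y, g (y + l) = g y) (y₀ : EuclideanSpace ℝ (Fin d)) :
    ∫ y in ZSpan.fundamentalDomain b, g (y + y₀) = ∫ y in ZSpan.fundamentalDomain b, g y := by
  set L := (Submodule.span ℤ (Set.range ⇑b)).toAddSubgroup
  have hFD : IsAddFundamentalDomain L (ZSpan.fundamentalDomain b) volume :=
    ZSpan.isAddFundamentalDomain' b volume
  haveI : Countable L := (inferInstance : Countable (Submodule.span ℤ (Set.range ⇑b)))
  have hginv : ∀ (l : L) (y : EuclideanSpace ℝ (Fin d)), g (l +ᵥ y) = g y := by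
    intro l y
    have h' : ((l : EuclideanSpace ℝ (Fin d)) + y) = y + (l : EuclideanSpace ℝ (Fin d)) :=
      add_comm _ _
    show g ((l : EuclideanSpace ℝ (Fin d)) + y) = g y
    rw [h', hg _ (span_sub_lattice b _ l.2)]
  have hFD' : IsAddFundamentalDomain L (y₀ +ᵥ ZSpan.fundamentalDomain b) volume :=
    hFD.vadd_of_comm y₀
  have himg : (fun y => y + y₀) '' (ZSpan.fundamentalDomain b)
      = y₀ +ᵥ ZSpan.fundamentalDomain b := by
    ext z
    simp only [Set.mem_image, Set.mem_vadd_set]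
    constructor
    · rintro ⟨w, hw, rfl⟩; exact ⟨w, hw, add_comm _ _⟩
    · rintro ⟨w, hw, rfl⟩; exact ⟨w, hw, add_comm _ _⟩
  calc ∫ y in ZSpan.fundamentalDomain b, g (y + y₀)
      = ∫ z in (fun y => y + y₀) '' (ZSpan.fundamentalDomain b), g z :=
        ((measurePreserving_add_right volume y₀).setIntegral_image_emb
          (Homeomorph.addRight y₀).isClosedEmbedding.measurableEmbedding g _).symm
    _ = ∫ z in y₀ +ᵥ ZSpan.fundamentalDomain b, g z := by rw [himg]
    _ = ∫ y in ZSpan.fundamentalDomain b, g y := hFD'.setIntegral_eq hFD hginv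

lemma integrableOn_fd_prod (b : Module.Basis (Fin d) ℝ (EuclideanSpace ℝ (Fin d)))
    {u : EuclideanSpace ℝ (Fin d) × EuclideanSpace ℝ (Fin d) → ℝ} (hu : Continuous u) :
    IntegrableOn u ((ZSpan.fundamentalDomain b) ×ˢ (ZSpan.fundamentalDomain b)) volume := by
  have hbd : Bornology.IsBounded
      ((ZSpan.fundamentalDomain b) ×ˢ (ZSpan.fundamentalDomain b)) :=
    (ZSpan.fundamentalDomain_isBounded b).prod (ZSpan.fundamentalDomain_isBounded b)
  have h1 : IntegrableOn u
      (closure ((ZSpan.fundamentalDomain b) ×ˢ (ZSpan.fundamentalDomain b))) volume :=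
    hu.locallyIntegrable.integrableOn_isCompact hbd.isCompact_closure
  exact h1.mono_set subset_closure

/-- On the complex torus `𝔸 = ℂ^d/(Λ ⊕ iΛ)` with flat Kähler metric given by a constant
positive-definite matrix `G`, the unique normalized solution `φ̂` of the complex
Monge–Ampère equation `det(G + ∂²φ̂/∂z∂z̄) = C·e^{f(x)}` with datum depending only on
`x = Re z` is invariant under all imaginary translations, and its restriction
`φ(x) = φ̂(x,0)` solves the real Monge–Ampère equation
`det(4G + ∂²φ/∂x∂x) = 4^d·C·e^{f(x)}`. -/
theorem stmt15 (b : Module.Basis (Fin d) ℝ (EuclideanSpace ℝ (Fin d)))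
    (G : Matrix (Fin d) (Fin d) ℝ) (hGs : G.IsSymm) (hGp : G.PosDef)
    (C : ℝ) (hC : 0 < C)
    (f : EuclideanSpace ℝ (Fin d) → ℝ)
    (hfper : ∀ l ∈ latticeOf b, ∀ x, f (x + l) = f x)
    (φh : EuclideanSpace ℝ (Fin d) × EuclideanSpace ℝ (Fin d) → ℝ)
    (hreg : ContDiff ℝ 3 φh)
    (hper : ∀ l ∈ latticeOf b, ∀ x y, φh (x + l, y) = φh (x, y) ∧ φh (x, y + l) = φh (x, y))
    (hpos : ∀ p, (Matrix.of fun α β => ((G α β : ℂ) + cHess φh α β p)).PosDef)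
    (heq : ∀ p, (Matrix.of fun α β => ((G α β : ℂ) + cHess φh α β p)).det =
      ((C * Real.exp (f p.1) : ℝ) : ℂ))
    (hnorm : ∫ p in (fundDomain b) ×ˢ (fundDomain b), φh p = 0)
    (huniq : ∀ ψ : EuclideanSpace ℝ (Fin d) × EuclideanSpace ℝ (Fin d) → ℝ,
      ContDiff ℝ 3 ψ →
      (∀ l ∈ latticeOf b, ∀ x y, ψ (x + l, y) = ψ (x, y) ∧ ψ (x, y + l) = ψ (x, y)) →
      (∀ p, (Matrix.of fun α β => ((G α β : ℂ) + cHess ψ α β p)).PosDef) →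
      (∀ p, (Matrix.of fun α β => ((G α β : ℂ) + cHess ψ α β p)).det =
        ((C * Real.exp (f p.1) : ℝ) : ℂ)) →
      (∫ p in (fundDomain b) ×ˢ (fundDomain b), ψ p = 0) → ψ = φh) :
    (∀ x y y', φh (x, y) = φh (x, y')) ∧
    (∀ x, (Matrix.of fun i j => 4 * G i j + pd2 (fun x' => φh (x', 0)) i j x).det =
      4 ^ d * C * Real.exp (f x)) := by
  classical
  have hFeq : fundDomain b = ZSpan.fundamentalDomain b := fundDomain_eq b
  -- Step 1 : invariance under imaginary translations
  have hshift : ∀ (y₀ x y : EuclideanSpace ℝ (Fin d)), φh (x, y + y₀) = φh (x, y) := by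
    intro y₀
    set c : (EuclideanSpace ℝ (Fin d)) × (EuclideanSpace ℝ (Fin d)) := ((0 : EuclideanSpace ℝ (Fin d)), y₀) with hc
    set ψ : (EuclideanSpace ℝ (Fin d)) × (EuclideanSpace ℝ (Fin d)) → ℝ := fun p => φh (p + c) with hψ
    have hψ0 : ∀ x y : EuclideanSpace ℝ (Fin d), ψ (x, y) = φh (x, y + y₀) := by
      intro x y
      show φh (x + 0, y + y₀) = φh (x, y + y₀)
      rw [add_zero]
    have hψreg : ContDiff ℝ 3 ψ := hreg.comp (contDiff_id.add contDiff_const)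
    have hψd2 : ∀ v w p, pd2' ψ v w p = pd2' φh v w (p + c) := by
      intro v w p
      unfold pd2'
      rw [hψ, itfd_shift hreg c 2 (by norm_num) p]
    have hmat : ∀ p, (Matrix.of fun α β => ((G α β : ℂ) + cHess ψ α β p)) =
        (Matrix.of fun α β => ((G α β : ℂ) + cHess φh α β (p + c))) := by
      intro p
      ext α β
      simp only [Matrix.of_apply, cHess, hψd2]
    have hp1 : ∀ p : (EuclideanSpace ℝ (Fin d)) × (EuclideanSpace ℝ (Fin d)), (p + c).1 = p.1 := by
      intro p
      show p.1 + 0 = p.1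
      rw [add_zero]
    have hψper : ∀ l ∈ latticeOf b, ∀ x y, ψ (x + l, y) = ψ (x, y) ∧ ψ (x, y + l) = ψ (x, y) := by
      intro l hl x y
      constructor
      · rw [hψ0, hψ0]
        exact (hper l hl x (y + y₀)).1
      · rw [hψ0, hψ0]
        have h' : y + l + y₀ = (y + y₀) + l := by abel
        rw [h']
        exact (hper l hl x (y + y₀)).2
    have hψpos : ∀ p, (Matrix.of fun α β => ((G α β : ℂ) + cHess ψ α β p)).PosDef := by
      intro p; rw [hmat p]; exact hpos (p + c)
    have hψeq : ∀ p, (Matrix.of fun α β => ((G α β : ℂ) + cHess ψ α β p)).det =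
        ((C * Real.exp (f p.1) : ℝ) : ℂ) := by
      intro p
      rw [hmat p, heq (p + c), hp1 p]
    have hψnorm : ∫ p in (fundDomain b) ×ˢ (fundDomain b), ψ p = 0 := by
      rw [hFeq] at hnorm ⊢
      have hint1 : IntegrableOn φh
          ((ZSpan.fundamentalDomain b) ×ˢ (ZSpan.fundamentalDomain b)) volume :=
        integrableOn_fd_prod b hreg.continuous
      have hint2 : IntegrableOn ψ
          ((ZSpan.fundamentalDomain b) ×ˢ (ZSpan.fundamentalDomain b)) volume :=
        integrableOn_fd_prod b hψreg.continuous
      have hinner : ∀ x : EuclideanSpace ℝ (Fin d), (∫ y in ZSpan.fundamentalDomain b, ψ (x, y))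
          = ∫ y in ZSpan.fundamentalDomain b, φh (x, y) := by
        intro x
        simp only [hψ0]
        exact integral_fd_translate b (fun y => φh (x, y))
          (fun l hl y => (hper l hl x y).2) y₀
      calc ∫ p in (ZSpan.fundamentalDomain b) ×ˢ (ZSpan.fundamentalDomain b), ψ p
          = ∫ x in ZSpan.fundamentalDomain b, ∫ y in ZSpan.fundamentalDomain b, ψ (x, y) := by
            rw [MeasureTheory.Measure.volume_eq_prod _ _] at hint2 ⊢
            exact setIntegral_prod ψ hint2
        _ = ∫ x in ZSpan.fundamentalDomain b, ∫ y in ZSpan.fundamentalDomain b, φh (x, y) := by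
            simp only [hinner]
        _ = ∫ p in (ZSpan.fundamentalDomain b) ×ˢ (ZSpan.fundamentalDomain b), φh p := by
            rw [MeasureTheory.Measure.volume_eq_prod _ _] at hint1 ⊢
            exact (setIntegral_prod φh hint1).symm
        _ = 0 := hnorm
    have hfin : ψ = φh := huniq ψ hψreg hψper hψpos hψeq hψnorm
    intro x y
    rw [← hψ0 x y, hfin]
  have hinv : ∀ x y y', φh (x, y) = φh (x, y') := by
    intro x y y'
    have h1 : φh (x, y) = φh (x, 0) := by
      have := hshift y x 0; rwa [zero_add] at this
    have h2 : φh (x, y') = φh (x, 0) := by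
      have := hshift y' x 0; rwa [zero_add] at this
    rw [h1, h2]
  refine ⟨hinv, ?_⟩
  intro x
  set ψr : EuclideanSpace ℝ (Fin d) → ℝ := fun x' => φh (x', 0) with hψr
  have hφcomp : φh = ψr ∘ (ContinuousLinearMap.fst ℝ (EuclideanSpace ℝ (Fin d)) (EuclideanSpace ℝ (Fin d))) := by
    funext p
    exact hinv p.1 p.2 0
  have hψrreg : ContDiff ℝ 3 ψr := hreg.comp (contDiff_id.prodMk contDiff_const)
  have hkey : ∀ v w p, pd2' φh v w p = iteratedFDeriv ℝ 2 ψr p.1 ![v.1, w.1] := by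
    intro v w p
    unfold pd2'
    rw [hφcomp, ContinuousLinearMap.iteratedFDeriv_comp_right
      (ContinuousLinearMap.fst ℝ (EuclideanSpace ℝ (Fin d)) (EuclideanSpace ℝ (Fin d))) hψrreg p (by norm_num)]
    rw [ContinuousMultilinearMap.compContinuousLinearMap_apply]
    congr 1
    funext i
    fin_cases i <;> rfl
  have hYl : ∀ (α : Fin d) w p, pd2' φh (dirY α) w p = 0 := by
    intro α w p
    rw [hkey]
    exact (iteratedFDeriv ℝ 2 ψr p.1).map_coord_zero 0 rfl
  have hYr : ∀ v (β : Fin d) p, pd2' φh v (dirY β) p = 0 := by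
    intro v β p
    rw [hkey]
    exact (iteratedFDeriv ℝ 2 ψr p.1).map_coord_zero 1 rfl
  have hXX : ∀ (i j : Fin d) p, pd2' φh (dirX i) (dirX j) p = pd2 ψr i j p.1 := by
    intro i j p
    rw [hkey]
    rfl
  have hent : ∀ α β : Fin d, ((G α β : ℂ) + cHess φh α β ((x, (0 : EuclideanSpace ℝ (Fin d))) : (EuclideanSpace ℝ (Fin d)) × (EuclideanSpace ℝ (Fin d))))
      = ((G α β + pd2 ψr α β x / 4 : ℝ) : ℂ) := by
    intro α β
    rw [cHess, hXX, hYl, hYr, hYl]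
    push_cast
    ring
  have hMc : (Matrix.of fun α β => ((G α β : ℂ) + cHess φh α β ((x, (0 : EuclideanSpace ℝ (Fin d))) : (EuclideanSpace ℝ (Fin d)) × (EuclideanSpace ℝ (Fin d)))))
      = (Matrix.of fun α β => (G α β + pd2 ψr α β x / 4 : ℝ)).map Complex.ofRealHom := by
    ext α β
    simp only [Matrix.of_apply, Matrix.map_apply, hent α β]
    rfl
  have hdetC := heq ((x, (0 : EuclideanSpace ℝ (Fin d))) : (EuclideanSpace ℝ (Fin d)) × (EuclideanSpace ℝ (Fin d)))
  rw [hMc, ← RingHom.mapMatrix_apply, ← RingHom.map_det] at hdetC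
  have hdetR : (Matrix.of fun α β => (G α β + pd2 ψr α β x / 4 : ℝ)).det
      = C * Real.exp (f x) := by
    rw [Complex.ofRealHom_eq_coe] at hdetC
    exact_mod_cast hdetC
  have h4 : (Matrix.of fun i j => 4 * G i j + pd2 ψr i j x)
      = (4 : ℝ) • (Matrix.of fun α β => (G α β + pd2 ψr α β x / 4 : ℝ)) := by
    ext i j
    simp only [Matrix.of_apply, Matrix.smul_apply, smul_eq_mul]
    ring
  rw [h4, Matrix.det_smul, hdetR]
  simp only [Fintype.card_fin]
  ring
end
end
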